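/- Let A be a C*-algebra, let a ∈ A be a positive contraction, let k ∈ ℕ, and let y₁, …, y_k ∈ A. Then there exist x₁, …, x_k ∈ A such that x₁*a x₁ + ⋯ + x_k*a x_k = y₁*(a − 1/2)₊ y₁ + ⋯ + y_k*(a − 1/2)₊ y_k and x₁*x₁ + ⋯ + x_k*x_k ≤ 2·( y₁*(a − 1/2)₊ y₁ + ⋯ + y_k*(a − 1/2)₊ y_k ) in the order of self-adjoint elements; in particular ‖x₁*x₁ + ⋯ + x_k*x_k‖ ≤ 2·‖y₁*(a − 1/2)₊ y₁ + ⋯ + y_k*(a − 1/2)₊ y_k‖. -/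

import Mathlib

open scoped CStarAlgebra

namespace Stmt19Aux

noncomputable section

def f (t : ℝ) : ℝ := max (t - 1/2) 0

def g (t : ℝ) : ℝ := Real.sqrt (f t / max t (1/2))

lemma f_nonneg (t : ℝ) : 0 ≤ f t := le_max_right _ _

lemma f_cont : Continuous f := by unfold f; fun_prop

lemma g_cont : Continuous g := by
  apply Real.continuous_sqrt.comp
  apply f_cont.div (continuous_id.max continuous_const)
  intro t
  have : (1/2 : ℝ) ≤ max t (1/2) := le_max_right _ _
  positivity

lemma f_zero : f 0 = 0 := by simp [f]

lemma g_zero : g 0 = 0 := by simp [g, f]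

lemma g_sq (t : ℝ) : g t * g t = f t / max t (1/2) := by
  have h : (0:ℝ) ≤ f t / max t (1/2) := by
    have : (1/2 : ℝ) ≤ max t (1/2) := le_max_right _ _
    have := f_nonneg t
    positivity
  rw [g, Real.mul_self_sqrt h]

lemma g_mul_id_mul_g (t : ℝ) : g t * t * g t = f t := by
  rw [mul_comm (g t) t, mul_assoc, g_sq]
  rcases le_or_gt t (1/2) with h | h
  · have : f t = 0 := by simp only [f, max_eq_right_iff]; linarith
    simp [this]
  · rw [max_eq_left h.le, mul_div_cancel₀ _ (by linarith)]

lemma g_sq_le (t : ℝ) : g t * g t ≤ 2 * f t := by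
  rw [g_sq]
  have h1 : (1/2 : ℝ) ≤ max t (1/2) := le_max_right _ _
  calc f t / max t (1/2) ≤ f t / (1/2) :=
        div_le_div_of_nonneg_left (f_nonneg t) (by norm_num) h1
    _ = 2 * f t := by ring

variable {A : Type*} [NonUnitalCStarAlgebra A]

lemma inr_sum_nonneg {k : ℕ} (z : Fin k → A) :
    letI : PartialOrder A⁺¹ := CStarAlgebra.spectralOrder A⁺¹
    (0 : A⁺¹) ≤ ((∑ i, star (z i) * z i : A) : A⁺¹) := by
  letI : PartialOrder A⁺¹ := CStarAlgebra.spectralOrder A⁺¹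
  letI : StarOrderedRing A⁺¹ := CStarAlgebra.spectralOrderedRing A⁺¹
  have e : ((∑ i, star (z i) * z i : A) : A⁺¹) = ∑ i, star ((z i : A⁺¹)) * (z i : A⁺¹) := by
    induction (Finset.univ : Finset (Fin k)) using Finset.induction with
    | empty => simp
    | insert _ _ h ih =>
      rw [Finset.sum_insert h, Finset.sum_insert h, Unitization.inr_add, ih,
        Unitization.inr_mul, Unitization.inr_star]
  rw [e]
  exact Finset.sum_nonneg fun i _ => star_mul_self_nonneg _

/-- A finite sum of elements of the form `star z * z` is of the form `star w * w`. -/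
lemma exists_star_mul_self {k : ℕ} (z : Fin k → A) :
    ∃ w : A, ∑ i, star (z i) * z i = star w * w := by
  set s : A := ∑ i, star (z i) * z i with hs
  have hssa : IsSelfAdjoint s := by
    rw [hs]
    exact isSelfAdjoint_iff.mpr <| by simp [Finset.sum_apply, star_sum, mul_assoc]
  letI : PartialOrder A⁺¹ := CStarAlgebra.spectralOrder A⁺¹
  letI : StarOrderedRing A⁺¹ := CStarAlgebra.spectralOrderedRing A⁺¹
  have hnn : (0 : A⁺¹) ≤ (s : A⁺¹) := inr_sum_nonneg z
  have hqs : ∀ t ∈ quasispectrum ℝ s, 0 ≤ t := by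
    intro t ht
    rw [Unitization.quasispectrum_eq_spectrum_inr' ℝ ℂ] at ht
    exact spectrum_nonneg_of_nonneg hnn ht
  refine ⟨cfcₙ (fun t : ℝ => Real.sqrt (max t 0)) s, ?_⟩
  have hw : IsSelfAdjoint (cfcₙ (fun t : ℝ => Real.sqrt (max t 0)) s) := cfcₙ_predicate _ s
  rw [hw.star_eq,
    ← cfcₙ_mul _ _ s (by fun_prop) (by simp) (by fun_prop) (by simp)]
  have e1 : cfcₙ (fun t : ℝ => Real.sqrt (max t 0) * Real.sqrt (max t 0)) s
      = cfcₙ (id : ℝ → ℝ) s := by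
    apply cfcₙ_congr
    intro t ht
    have := hqs t ht
    simp only [max_eq_left this, Real.mul_self_sqrt this, id]
  rw [e1, cfcₙ_id ℝ s]

end

end Stmt19Aux

open Stmt19Aux in
/-- Replacing `(a - 1/2)₊`-conjugates by `a`-conjugates with control: there exist `xᵢ` with
`∑ xᵢ* a xᵢ = ∑ yᵢ* (a - 1/2)₊ yᵢ` and `∑ xᵢ* xᵢ ≤ 2 ∑ yᵢ* (a - 1/2)₊ yᵢ` (in the order of
self-adjoint elements, expressed via positivity `∃ w, · = w* w`); in particular
`‖∑ xᵢ* xᵢ‖ ≤ 2 ‖∑ yᵢ* (a - 1/2)₊ yᵢ‖`. Here `(a - 1/2)₊` is obtained by applying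
`t ↦ max (t - 1/2) 0` to `a` via the (non-unital) continuous functional calculus. -/
theorem stmt_19 {A : Type*} [NonUnitalCStarAlgebra A]
    (a : A) (hapos : ∃ y : A, a = star y * y) (ha : ‖a‖ ≤ 1)
    (k : ℕ) (y : Fin k → A) :
    ∃ x : Fin k → A,
      (∑ i, star (x i) * a * x i) =
        (∑ i, star (y i) * cfcₙ (fun t : ℝ => max (t - 1/2) 0) a * y i) ∧
      (∃ w : A, (2 : ℝ) • (∑ i, star (y i) * cfcₙ (fun t : ℝ => max (t - 1/2) 0) a * y i)
          - (∑ i, star (x i) * x i) = star w * w) ∧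
      ‖∑ i, star (x i) * x i‖ ≤
        2 * ‖∑ i, star (y i) * cfcₙ (fun t : ℝ => max (t - 1/2) 0) a * y i‖ := by
  obtain ⟨z, hz⟩ := hapos
  have hsa : IsSelfAdjoint a := hz ▸ IsSelfAdjoint.star_mul_self z
  have hf_eq : (fun t : ℝ => max (t - 1/2) 0) = f := rfl
  set b : A := cfcₙ g a with hb
  have hbsa : IsSelfAdjoint b := cfcₙ_predicate g a
  -- b * a * b = cfcₙ f a
  have key : b * a * b = cfcₙ f a := by
    rw [hb]
    nth_rewrite 2 [show a = cfcₙ (id : ℝ → ℝ) a from (cfcₙ_id ℝ a).symm]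
    rw [← cfcₙ_mul g id a g_cont.continuousOn g_zero continuousOn_id rfl,
      ← cfcₙ_mul _ g a (by exact (g_cont.mul continuous_id).continuousOn)
        (by simp [g_zero]) g_cont.continuousOn g_zero]
    exact cfcₙ_congr fun t _ => g_mul_id_mul_g t
  set c : A := cfcₙ (fun t => Real.sqrt (2 * f t - g t * g t)) a with hc
  have hcsa : IsSelfAdjoint c := cfcₙ_predicate _ a
  have hsqc : Continuous (fun t => Real.sqrt (2 * f t - g t * g t)) :=
    Real.continuous_sqrt.comp ((continuous_const.mul f_cont).sub (g_cont.mul g_cont))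
  have hcc : c * c = (2 : ℝ) • cfcₙ f a - b * b := by
    rw [hc, ← cfcₙ_mul _ _ a hsqc.continuousOn (by simp [f_zero, g_zero])
      hsqc.continuousOn (by simp [f_zero, g_zero])]
    have e1 : cfcₙ (fun t : ℝ => Real.sqrt (2 * f t - g t * g t) *
          Real.sqrt (2 * f t - g t * g t)) a
        = cfcₙ (fun t : ℝ => (2:ℝ) • f t - g t * g t) a := by
      apply cfcₙ_congr fun t _ => ?_
      rw [Real.mul_self_sqrt (by linarith [g_sq_le t])]
      simp
    rw [e1, cfcₙ_sub (fun t : ℝ => (2:ℝ) • f t) (fun t : ℝ => g t * g t) a (by exact (f_cont.const_smul (2:ℝ)).continuousOn)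
        (by simp [f_zero]) (g_cont.mul g_cont).continuousOn (by simp [g_zero]),
      cfcₙ_smul (2:ℝ) f a f_cont.continuousOn f_zero,
      cfcₙ_mul g g a g_cont.continuousOn g_zero g_cont.continuousOn g_zero, hb]
  -- the difference identity
  have hdiff : (2 : ℝ) • (∑ i, star (y i) * cfcₙ f a * y i)
      - (∑ i, star (b * y i) * (b * y i)) = ∑ i, star (c * y i) * (c * y i) := by
    simp only [star_mul, hbsa.star_eq, hcsa.star_eq]
    rw [Finset.smul_sum, ← Finset.sum_sub_distrib]
    refine Finset.sum_congr rfl fun i _ => ?_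
    have h1 : c * (c * y i) = ((2 : ℝ) • cfcₙ f a - b * b) * y i := by
      rw [← mul_assoc, hcc]
    rw [mul_assoc (star (y i)) c, h1, sub_mul, smul_mul_assoc, mul_assoc b, mul_sub,
      mul_smul_comm]
    simp only [mul_assoc]
  obtain ⟨w, hw⟩ := exists_star_mul_self (fun i => c * y i)
  refine ⟨fun i => b * y i, ?_, ⟨w, ?_⟩, ?_⟩
  · simp only [star_mul, hbsa.star_eq, hf_eq, ← key]
    simp [mul_assoc]
  · rw [hf_eq, hdiff, hw]
  · rw [hf_eq]
    set s : A := ∑ i, star (b * y i) * (b * y i) with hs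
    set T : A := ∑ i, star (y i) * cfcₙ f a * y i with hT
    letI : PartialOrder A⁺¹ := CStarAlgebra.spectralOrder A⁺¹
    letI : StarOrderedRing A⁺¹ := CStarAlgebra.spectralOrderedRing A⁺¹
    have h0 : (0 : A⁺¹) ≤ (s : A⁺¹) := inr_sum_nonneg (fun i => b * y i)
    have hle : (s : A⁺¹) ≤ (2 : ℝ) • (T : A⁺¹) := by
      rw [← sub_nonneg]
      have e2 : (2 : ℝ) • ((T : A) : A⁺¹) - ((s : A) : A⁺¹)
          = (((2 : ℝ) • T - s : A) : A⁺¹) := by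
        rw [Unitization.inr_sub, Unitization.inr_smul]
      rw [e2, hdiff, hw, Unitization.inr_mul, Unitization.inr_star]
      exact star_mul_self_nonneg _
    calc ‖s‖ = ‖((s : A) : A⁺¹)‖ := (Unitization.norm_inr s).symm
      _ ≤ ‖(2 : ℝ) • ((T : A) : A⁺¹)‖ := CStarAlgebra.norm_le_norm_of_nonneg_of_le h0 hle
      _ = 2 * ‖T‖ := by rw [norm_smul, Unitization.norm_inr]; simp
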